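/- Let α ∈ (0,1), λ > 0, and let v : [0,∞) → ℝ be Lipschitz with v(s) = 0 for all s ≥ 1. Define u : ℝ² → ℝ by u(z) = v(|z|), and for 0 < r < 1 set x₀ = (r, 0). Define F_λ(s,r) = ∫_0^π e^{−λ√(s² + r² − 2sr cos θ)} (s² + r² − 2sr cos θ)^{−(α+2)/2} dθ for s ≥ 0, s ≠ r. Then the function y ↦ (u(x₀+y) − u(x₀)) e^{−λ|y|} |y|^{−(α+2)} is Lebesgue integrable on ℝ² \ {0} and ∫_{ℝ²\{0}} (u(x₀+y) − u(x₀)) e^{−λ|y|} |y|^{−(α+2)} dy = 2 ∫_0^∞ s·(v(s) − v(r))·F_λ(s,r) ds. -/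

import Mathlib

open MeasureTheory Set

theorem integrableOn_polarCoord_target_iff (f : ℝ × ℝ → ℝ) :
    IntegrableOn (fun p => p.1 • f (polarCoord.symm p)) polarCoord.target volume ↔
      Integrable f volume := by
  set B : ℝ × ℝ → ℝ × ℝ →L[ℝ] ℝ × ℝ := fun p =>
    LinearMap.toContinuousLinearMap (Matrix.toLin (Module.Basis.finTwoProd ℝ) (Module.Basis.finTwoProd ℝ)
      !![Real.cos p.2, -p.1 * Real.sin p.2; Real.sin p.2, p.1 * Real.cos p.2]) with hB
  have hder : ∀ p ∈ polarCoord.symm.source, HasFDerivWithinAt polarCoord.symm (B p)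
      polarCoord.symm.source p := fun p _ =>
    (hasFDerivAt_polarCoord_symm p).hasFDerivWithinAt
  have B_det : ∀ p, (B p).det = p.1 := by
    intro p
    conv_rhs => rw [← one_mul p.1, ← Real.cos_sq_add_sin_sq p.2]
    simp only [hB, neg_mul, LinearMap.det_toContinuousLinearMap, LinearMap.det_toLin,
      Matrix.det_fin_two_of, sub_neg_eq_add]
    ring
  have hmeas : MeasurableSet polarCoord.symm.source := by
    rw [OpenPartialHomeomorph.symm_source]; exact polarCoord.open_target.measurableSet
  have key := integrableOn_image_iff_integrableOn_abs_det_fderiv_smul volume hmeas hder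
      polarCoord.symm.injOn f
  rw [polarCoord.symm.image_source_eq_target, OpenPartialHomeomorph.symm_target] at key
  simp only [OpenPartialHomeomorph.symm_source] at key
  have h1 : Integrable f volume ↔ IntegrableOn f polarCoord.source volume := by
    unfold IntegrableOn
    rw [Measure.restrict_congr_set polarCoord_source_ae_eq_univ, Measure.restrict_univ]
  rw [h1, key]
  exact integrableOn_congr_fun
    (fun x hx => by rw [B_det, abs_of_pos hx.1])
    (polarCoord.open_target.measurableSet)

theorem aux_complex_polar_iff (f : ℂ → ℝ) :
    IntegrableOn (fun p : ℝ × ℝ => p.1 • f (Complex.polarCoord.symm p)) polarCoord.target volume ↔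
      Integrable f volume := by
  have h1 := integrableOn_polarCoord_target_iff
    (fun q : ℝ × ℝ => f (Complex.measurableEquivRealProd.symm q))
  have h2 := (Complex.volume_preserving_equiv_real_prod.symm).integrable_comp_emb
    (Complex.measurableEquivRealProd.symm.measurableEmbedding) (g := f)
  exact h1.trans h2

theorem aux_integrable_rpow_exp {α lam : ℝ} (hα : α ∈ Ioo (0:ℝ) 1) (hlam : 0 < lam) :
    IntegrableOn (fun s : ℝ => s ^ (-α) * Real.exp (-lam * s)) (Ioi 0) volume := by
  rw [← Ioc_union_Ioi_eq_Ioi (zero_le_one (α := ℝ)), integrableOn_union]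
  constructor
  · have hint : IntegrableOn (fun s : ℝ => s ^ (-α)) (Ioc (0:ℝ) 1) volume := by
      have h := intervalIntegral.intervalIntegrable_rpow' (a := 0) (b := 1) (r := -α)
        (by linarith [hα.2])
      rwa [intervalIntegrable_iff_integrableOn_Ioc_of_le zero_le_one] at h
    refine hint.mono' ?_ ?_
    · refine (ContinuousOn.mul ?_ ?_).aestronglyMeasurable measurableSet_Ioc
      · exact fun s hs => (Real.continuousAt_rpow_const s (-α)
          (Or.inl (ne_of_gt hs.1))).continuousWithinAt
      · exact (Real.continuous_exp.comp (continuous_const.mul continuous_id)).continuousOn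
    · filter_upwards [ae_restrict_mem measurableSet_Ioc] with s hs
      rw [Real.norm_eq_abs, abs_of_nonneg
        (mul_nonneg (Real.rpow_nonneg hs.1.le _) (Real.exp_nonneg _))]
      nth_rewrite 2 [← mul_one (s ^ (-α))]
      refine mul_le_mul_of_nonneg_left ?_ (Real.rpow_nonneg hs.1.le _)
      exact Real.exp_le_one_iff.2 (by nlinarith [hs.1])
  · refine (exp_neg_integrableOn_Ioi 1 hlam).mono' ?_ ?_
    · refine (ContinuousOn.mul ?_ ?_).aestronglyMeasurable measurableSet_Ioi
      · exact fun s hs => (Real.continuousAt_rpow_const s (-α)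
          (Or.inl (by intro h; rw [h] at hs; exact absurd hs (by norm_num)))).continuousWithinAt
      · exact (Real.continuous_exp.comp (continuous_const.mul continuous_id)).continuousOn
    · filter_upwards [ae_restrict_mem measurableSet_Ioi] with s hs
      have hs0 : (0:ℝ) ≤ s := le_trans zero_le_one (le_of_lt hs)
      rw [Real.norm_eq_abs, abs_of_nonneg
        (mul_nonneg (Real.rpow_nonneg hs0 _) (Real.exp_nonneg _))]
      nth_rewrite 2 [← one_mul (Real.exp _)]
      refine mul_le_mul_of_nonneg_right ?_ (Real.exp_nonneg _)
      exact Real.rpow_le_one_of_one_le_of_nonpos (le_of_lt hs) (by linarith [hα.1])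

theorem aux_int_psi {α lam : ℝ} (hα : α ∈ Ioo (0:ℝ) 1) (hlam : 0 < lam) {C : ℝ} (hC : 0 ≤ C) :
    Integrable (fun w : ℂ => C * (min ‖w‖ 1 * Real.exp (-lam * ‖w‖) * ‖w‖ ^ (-(α+2)))) volume := by
  set G : ℝ → ℝ := fun s => s * (C * (min s 1 * Real.exp (-lam * s) * s ^ (-(α+2)))) with hGdef
  have hG : Integrable G (volume.restrict (Ioi (0:ℝ))) := by
    refine (((aux_integrable_rpow_exp hα hlam).const_mul C)).mono' ?_ ?_
    · refine ContinuousOn.aestronglyMeasurable ?_ measurableSet_Ioi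
      intro s hs
      have hrp : ContinuousWithinAt (fun t : ℝ => t ^ (-(α+2))) (Ioi 0) s :=
        (Real.continuousAt_rpow_const s _ (Or.inl (ne_of_gt hs))).continuousWithinAt
      exact (continuousWithinAt_id.mul (continuousWithinAt_const.mul
        (((continuousWithinAt_id.min continuousWithinAt_const).mul
          ((Real.continuous_exp.comp (continuous_const.mul continuous_id)).continuousWithinAt)).mul
          hrp)))
    · filter_upwards [ae_restrict_mem measurableSet_Ioi] with s hs
      have hs0 : (0:ℝ) < s := hs
      have hE : (0:ℝ) ≤ Real.exp (-lam * s) := Real.exp_nonneg _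
      have hP : (0:ℝ) ≤ s ^ (-(α+2)) := Real.rpow_nonneg hs0.le _
      have hm0 : (0:ℝ) ≤ min s 1 := le_min hs0.le zero_le_one
      have key : s ^ (-α) = s * s * s ^ (-(α+2)) := by
        rw [show -α = 1 + 1 + (-(α+2)) by ring, Real.rpow_add hs0, Real.rpow_add hs0,
          Real.rpow_one]
      rw [Real.norm_eq_abs, hGdef, abs_of_nonneg (by positivity)]
      calc s * (C * (min s 1 * Real.exp (-lam * s) * s ^ (-(α+2))))
          = (C * Real.exp (-lam * s) * s ^ (-(α+2)) * s) * min s 1 := by ring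
        _ ≤ (C * Real.exp (-lam * s) * s ^ (-(α+2)) * s) * s :=
            mul_le_mul_of_nonneg_left (min_le_left _ _) (by positivity)
        _ = C * ((s * s * s ^ (-(α+2))) * Real.exp (-lam * s)) := by ring
        _ = C * (s ^ (-α) * Real.exp (-lam * s)) := by rw [← key]
  refine (aux_complex_polar_iff _).1 ?_
  have heq : EqOn (fun p : ℝ × ℝ => p.1 •
      (C * (min ‖Complex.polarCoord.symm p‖ 1 * Real.exp (-lam * ‖Complex.polarCoord.symm p‖) *
        ‖Complex.polarCoord.symm p‖ ^ (-(α+2))))) (fun p => G p.1) polarCoord.target := by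
    intro p hp
    rw [polarCoord_target] at hp
    have h1 : ‖Complex.polarCoord.symm p‖ = p.1 := by
      rw [Complex.norm_polarCoord_symm, abs_of_pos hp.1]
    simp only [h1, smul_eq_mul, hGdef]
  rw [integrableOn_congr_fun heq polarCoord.open_target.measurableSet, polarCoord_target,
    IntegrableOn, Measure.volume_eq_prod ℝ ℝ, ← Measure.prod_restrict]
  have := hG.mul_prod (integrable_const (μ := volume.restrict (Ioo (-Real.pi) Real.pi)) (1:ℝ))
  simpa using this

theorem aux_meas_rpow (c : ℂ) (q : ℝ) : Measurable fun z : ℂ => ‖z - c‖ ^ q := by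
  have m1 : Measurable fun t : ℝ => t ^ q := by measurability
  exact m1.comp ((measurable_id.sub measurable_const).norm)

/-- Two-dimensional isotropic case: for `α ∈ (0,1)`, `λ > 0`, a Lipschitz radial profile
`v : [0,∞) → ℝ` vanishing on `[1,∞)`, `u(z) = v(|z|)` and `x₀ = (r,0)` with `0 < r < 1`,
the integrand `y ↦ (u(x₀+y) − u(x₀)) e^{-λ|y|} |y|^{-(α+2)}` is integrable on `ℝ² \ {0}`
and its integral reduces in polar coordinates to
`2 ∫₀^∞ s (v(s) − v(r)) F_λ(s,r) ds` with the angular kernel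
`F_λ(s,r) = ∫₀^π e^{-λ√(s²+r²−2sr cos θ)} (s²+r²−2sr cos θ)^{-(α+2)/2} dθ`. -/
theorem tempered_levy_isotropic_polar_reduction
    (α lam r : ℝ) (hα : α ∈ Ioo (0:ℝ) 1) (hlam : 0 < lam) (hr : r ∈ Ioo (0:ℝ) 1)
    (v : ℝ → ℝ) (K : NNReal) (hv : LipschitzOnWith K v (Ici 0))
    (hv1 : ∀ s : ℝ, 1 ≤ s → v s = 0)
    (u : EuclideanSpace ℝ (Fin 2) → ℝ) (hu : ∀ z, u z = v ‖z‖)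
    (x₀ : EuclideanSpace ℝ (Fin 2)) (hx₀ : ∀ i, x₀ i = if i = 0 then r else 0) :
    IntegrableOn
      (fun y : EuclideanSpace ℝ (Fin 2) =>
        (u (x₀ + y) - u x₀) * Real.exp (-lam * ‖y‖) * ‖y‖ ^ (-(α + 2)))
      ({0}ᶜ : Set (EuclideanSpace ℝ (Fin 2)))
    ∧ (∫ y in ({0}ᶜ : Set (EuclideanSpace ℝ (Fin 2))),
          (u (x₀ + y) - u x₀) * Real.exp (-lam * ‖y‖) * ‖y‖ ^ (-(α + 2)))
      = 2 * ∫ s in Ioi (0:ℝ),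
          s * (v s - v r) *
            ∫ θ in Ioo (0:ℝ) Real.pi,
              Real.exp (-lam * Real.sqrt (s ^ 2 + r ^ 2 - 2 * s * r * Real.cos θ)) *
                (s ^ 2 + r ^ 2 - 2 * s * r * Real.cos θ) ^ (-(α + 2) / 2) := by
  obtain ⟨hα0, hα1⟩ := hα
  obtain ⟨hr0, hr1⟩ := hr
  have hK : (0:ℝ) ≤ K := K.2
  have vlip : ∀ a b : ℝ, 0 ≤ a → 0 ≤ b → |v a - v b| ≤ K * |a - b| := by
    intro a b ha hb
    have := hv.dist_le_mul a ha b hb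
    rwa [Real.dist_eq, Real.dist_eq] at this
  have vbd : ∀ a : ℝ, 0 ≤ a → |v a| ≤ K := by
    intro a ha
    rcases le_or_gt 1 a with h | h
    · rw [hv1 a h]; simpa using hK
    · have h0 := vlip a 1 ha zero_le_one
      rw [hv1 1 le_rfl, sub_zero] at h0
      refine h0.trans ?_
      have h1 : |a - 1| ≤ 1 := by rw [abs_of_nonpos (by linarith)]; linarith
      nlinarith
  set c : ℂ := (r : ℂ) with hc
  set H : ℂ → ℝ := fun z =>
    (v ‖z‖ - v r) * Real.exp (-lam * ‖z - c‖) * ‖z - c‖ ^ (-(α+2)) with hH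
  have Hbd : ∀ z : ℂ, |H z| ≤
      (2*(K:ℝ)) * (min ‖z - c‖ 1 * Real.exp (-lam * ‖z - c‖) * ‖z - c‖ ^ (-(α+2))) := by
    intro z
    have hd0 : (0:ℝ) ≤ ‖z - c‖ := norm_nonneg _
    have hE : (0:ℝ) ≤ Real.exp (-lam * ‖z - c‖) := Real.exp_nonneg _
    have hP : (0:ℝ) ≤ ‖z - c‖ ^ (-(α+2)) := Real.rpow_nonneg hd0 _
    have hvd : |v ‖z‖ - v r| ≤ 2*(K:ℝ) * min ‖z - c‖ 1 := by
      rcases le_total ‖z - c‖ 1 with h | h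
      · rw [min_eq_left h]
        have h1 : |v ‖z‖ - v r| ≤ K * |‖z‖ - r| := vlip _ _ (norm_nonneg _) hr0.le
        have h2 : |‖z‖ - r| ≤ ‖z - c‖ := by
          have h3 := abs_norm_sub_norm_le z c
          have h4 : ‖c‖ = r := by
            rw [hc, Complex.norm_real, Real.norm_eq_abs, abs_of_pos hr0]
          rwa [h4] at h3
        nlinarith
      · rw [min_eq_right h]
        calc |v ‖z‖ - v r| ≤ |v ‖z‖| + |v r| := abs_sub _ _
          _ ≤ (K:ℝ) + K := add_le_add (vbd _ (norm_nonneg _)) (vbd _ hr0.le)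
          _ = 2*(K:ℝ)*1 := by ring
    calc |H z| = |v ‖z‖ - v r| * Real.exp (-lam*‖z - c‖) * ‖z - c‖ ^ (-(α+2)) := by
          rw [hH, abs_mul, abs_mul, abs_of_nonneg hE, abs_of_nonneg hP]
      _ ≤ (2*(K:ℝ) * min ‖z - c‖ 1) * Real.exp (-lam*‖z - c‖) * ‖z - c‖ ^ (-(α+2)) :=
          mul_le_mul_of_nonneg_right (mul_le_mul_of_nonneg_right hvd hE) hP
      _ = (2*(K:ℝ)) * (min ‖z - c‖ 1 * Real.exp (-lam*‖z - c‖) * ‖z - c‖ ^ (-(α+2))) := by ring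
  have hψ : Integrable (fun w : ℂ =>
      (2*(K:ℝ)) * (min ‖w‖ 1 * Real.exp (-lam * ‖w‖) * ‖w‖ ^ (-(α+2)))) volume :=
    aux_int_psi ⟨hα0, hα1⟩ hlam (by positivity)
  have hψc : Integrable (fun z : ℂ =>
      (2*(K:ℝ)) * (min ‖z - c‖ 1 * Real.exp (-lam * ‖z - c‖) * ‖z - c‖ ^ (-(α+2)))) volume := by
    have h := ((measurePreserving_add_right volume (-c)).integrable_comp_emb
      (MeasurableEquiv.addRight (-c)).measurableEmbedding).2 hψ
    simpa [sub_eq_add_neg, Function.comp_def] using h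
  have hHm : AEStronglyMeasurable H volume := by
    have c1 : Continuous fun z : ℂ => v ‖z‖ - v r :=
      (hv.continuousOn.comp_continuous continuous_norm fun z => norm_nonneg z).sub
        continuous_const
    have c2 : Continuous fun z : ℂ => Real.exp (-lam * ‖z - c‖) :=
      Real.continuous_exp.comp (continuous_const.mul (continuous_id.sub continuous_const).norm)
    have m3 : Measurable fun z : ℂ => ‖z - c‖ ^ (-(α+2)) := aux_meas_rpow c _
    exact ((c1.mul c2).aestronglyMeasurable.mul m3.aestronglyMeasurable)
  have hHint : Integrable H volume := by
    refine hψc.mono' hHm (Filter.Eventually.of_forall fun z => ?_)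
    rw [Real.norm_eq_abs]; exact Hbd z
  set e := (MeasurableEquiv.toLp 2 (Fin 2 → ℝ)).symm.trans
      (MeasurableEquiv.finTwoArrow.trans Complex.measurableEquivRealProd.symm) with he
  have hmp : MeasurePreserving e volume volume :=
    (EuclideanSpace.volume_preserving_symm_measurableEquiv_toLp _).trans
      ((volume_preserving_finTwoArrow ℝ).trans Complex.volume_preserving_equiv_real_prod.symm)
  have heval : ∀ y : EuclideanSpace ℝ (Fin 2), e y = Complex.mk (y 0) (y 1) := fun y => rfl
  have hnorm : ∀ y : EuclideanSpace ℝ (Fin 2), ‖y‖ = ‖e y‖ := by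
    intro y
    rw [heval, EuclideanSpace.norm_eq, Complex.norm_def,
      Complex.normSq_mk]
    congr 1
    simp [Fin.sum_univ_two, sq_abs]
    ring
  have hex : e x₀ = c := by
    rw [heval]; apply Complex.ext <;> simp [hx₀, hc]
  have headd : ∀ y : EuclideanSpace ℝ (Fin 2), e (x₀ + y) = e y + c := by
    intro y
    rw [heval]
    apply Complex.ext <;> simp [hx₀, hc, heval] <;> ring
  have hO : ∀ y : EuclideanSpace ℝ (Fin 2),
      (u (x₀ + y) - u x₀) * Real.exp (-lam * ‖y‖) * ‖y‖ ^ (-(α + 2)) = H (e y + c) := by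
    intro y
    have h1 : ‖x₀‖ = r := by
      rw [hnorm, hex, hc, Complex.norm_real, Real.norm_eq_abs, abs_of_pos hr0]
    have h2 : ‖x₀ + y‖ = ‖e y + c‖ := by rw [hnorm, headd]
    have h3 : ‖(e y + c) - c‖ = ‖y‖ := by rw [add_sub_cancel_right, ← hnorm]
    simp only [hu, hH, h1, h2, h3]
  have hIO : Integrable (fun y : EuclideanSpace ℝ (Fin 2) =>
      (u (x₀ + y) - u x₀) * Real.exp (-lam * ‖y‖) * ‖y‖ ^ (-(α + 2))) volume := by
    have h1 : Integrable (fun z : ℂ => H (z + c)) volume :=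
      ((measurePreserving_add_right volume c).integrable_comp_emb
        (MeasurableEquiv.addRight c).measurableEmbedding).2 hHint
    have h2 : Integrable (fun y => H (e y + c)) volume :=
      (hmp.integrable_comp_emb e.measurableEmbedding).2 h1
    exact h2.congr (Filter.Eventually.of_forall fun y => (hO y).symm)
  refine ⟨hIO.integrableOn, ?_⟩
  have hcompl : ({0}ᶜ : Set (EuclideanSpace ℝ (Fin 2))) =ᵐ[volume] univ := by
    rw [ae_eq_univ, compl_compl]
    exact measure_singleton 0
  rw [setIntegral_congr_set hcompl, setIntegral_univ]
  set J : ℝ × ℝ → ℝ := fun p =>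
    (p.1 * (v p.1 - v r)) * (Real.exp (-lam * Real.sqrt (p.1^2 + r^2 - 2*p.1*r*Real.cos p.2)) *
      Real.sqrt (p.1^2 + r^2 - 2*p.1*r*Real.cos p.2) ^ (-(α+2))) with hJ
  have hEqOn : EqOn (fun p : ℝ × ℝ => p.1 • H (Complex.polarCoord.symm p)) J
      polarCoord.target := by
    intro p hp
    rw [polarCoord_target] at hp
    have hp1 : (0:ℝ) < p.1 := hp.1
    have hzs : ‖Complex.polarCoord.symm p‖ = p.1 := by
      rw [Complex.norm_polarCoord_symm, abs_of_pos hp1]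
    have hsub : Complex.polarCoord.symm p - c
        = Complex.mk (p.1 * Real.cos p.2 - r) (p.1 * Real.sin p.2) := by
      apply Complex.ext <;>
        simp [Complex.polarCoord_symm_apply, hc, Complex.cos_ofReal_re, Complex.sin_ofReal_re]
    have hzc : ‖Complex.polarCoord.symm p - c‖
        = Real.sqrt (p.1^2 + r^2 - 2*p.1*r*Real.cos p.2) := by
      rw [hsub, Complex.norm_def, Complex.normSq_mk]
      congr 1
      linear_combination (p.1^2) * Real.sin_sq_add_cos_sq p.2
    simp only [hJ, smul_eq_mul, hH, hzs, hzc]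
    ring
  have hJint : IntegrableOn J (Ioi (0:ℝ) ×ˢ Ioo (-Real.pi) Real.pi)
      ((volume : Measure ℝ).prod volume) := by
    have h := (aux_complex_polar_iff H).2 hHint
    have h2 := (integrableOn_congr_fun hEqOn polarCoord.open_target.measurableSet).1 h
    rwa [polarCoord_target] at h2
  have step2 : (∫ y : EuclideanSpace ℝ (Fin 2),
      (u (x₀ + y) - u x₀) * Real.exp (-lam * ‖y‖) * ‖y‖ ^ (-(α + 2)))
      = ∫ s in Ioi (0:ℝ), ∫ θ in Ioo (-Real.pi) Real.pi, J (s, θ) := by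
    calc (∫ y : EuclideanSpace ℝ (Fin 2),
        (u (x₀ + y) - u x₀) * Real.exp (-lam * ‖y‖) * ‖y‖ ^ (-(α + 2)))
        = ∫ y, H (e y + c) := integral_congr_ae (Filter.Eventually.of_forall hO)
      _ = ∫ z, H (z + c) := hmp.integral_comp e.measurableEmbedding fun z => H (z + c)
      _ = ∫ z, H z := integral_add_right_eq_self _ c
      _ = ∫ p in polarCoord.target, p.1 • H (Complex.polarCoord.symm p) :=
          (Complex.integral_comp_polarCoord_symm H).symm
      _ = ∫ p in polarCoord.target, J p :=
          setIntegral_congr_fun polarCoord.open_target.measurableSet hEqOn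
      _ = ∫ p in Ioi (0:ℝ) ×ˢ Ioo (-Real.pi) Real.pi, J p := by rw [polarCoord_target]
      _ = ∫ s in Ioi (0:ℝ), ∫ θ in Ioo (-Real.pi) Real.pi, J (s, θ) := setIntegral_prod J hJint
  rw [step2, ← integral_const_mul]
  have hne : ∀ᵐ s : ℝ, s ≠ r := by
    have hset : {a : ℝ | ¬ a ≠ r} = {r} := by ext a; simp [not_not]
    rw [ae_iff, hset]
    exact measure_singleton r
  refine setIntegral_congr_ae measurableSet_Ioi ?_
  filter_upwards [hne] with s hsr hs
  have hs0 : (0:ℝ) < s := hs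
  have hxpos : ∀ θ : ℝ, 0 < s^2 + r^2 - 2*s*r*Real.cos θ := by
    intro θ
    have h1 : (0:ℝ) < (s - r)^2 := by
      have := sub_ne_zero.2 hsr
      positivity
    nlinarith [Real.cos_le_one θ, mul_pos hs0 hr0]
  set E : ℝ → ℝ := fun θ => Real.exp (-lam * Real.sqrt (s^2 + r^2 - 2*s*r*Real.cos θ)) *
      Real.sqrt (s^2 + r^2 - 2*s*r*Real.cos θ) ^ (-(α+2)) with hEdef
  have hcontE : Continuous E := by
    have hx : Continuous fun θ : ℝ => s^2 + r^2 - 2*s*r*Real.cos θ :=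
      continuous_const.sub (continuous_const.mul Real.continuous_cos)
    have hsq : Continuous fun θ : ℝ => Real.sqrt (s^2 + r^2 - 2*s*r*Real.cos θ) :=
      Real.continuous_sqrt.comp hx
    exact (Real.continuous_exp.comp (continuous_const.mul hsq)).mul
      (hsq.rpow_const fun θ => Or.inl (ne_of_gt (Real.sqrt_pos.2 (hxpos θ))))
  have hJE : ∀ θ : ℝ, J (s, θ) = (s * (v s - v r)) * E θ := fun θ => rfl
  simp only [hJE]
  rw [MeasureTheory.integral_const_mul]
  have heven : (∫ θ in Ioo (-Real.pi) Real.pi, E θ) = 2 * ∫ θ in Ioo (0:ℝ) Real.pi, E θ := by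
    have hpi : (0:ℝ) ≤ Real.pi := Real.pi_pos.le
    rw [← integral_Ioc_eq_integral_Ioo,
      ← intervalIntegral.integral_of_le (by linarith : -Real.pi ≤ Real.pi),
      ← intervalIntegral.integral_add_adjacent_intervals (a := -Real.pi) (b := 0) (c := Real.pi)
        (hcontE.intervalIntegrable _ _) (hcontE.intervalIntegrable _ _)]
    have hneg : (∫ θ in (-Real.pi)..0, E θ) = ∫ θ in (0:ℝ)..Real.pi, E θ := by
      have h := intervalIntegral.integral_comp_neg (a := (0:ℝ)) (b := Real.pi) E
      rw [neg_zero] at h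
      rw [← h]
      refine intervalIntegral.integral_congr fun x _ => ?_
      rw [hEdef]
      simp [Real.cos_neg]
    rw [hneg, intervalIntegral.integral_of_le hpi, integral_Ioc_eq_integral_Ioo]
    ring
  rw [heven]
  have hFeq : (∫ θ in Ioo (0:ℝ) Real.pi, E θ) = ∫ θ in Ioo (0:ℝ) Real.pi,
      Real.exp (-lam * Real.sqrt (s ^ 2 + r ^ 2 - 2 * s * r * Real.cos θ)) *
        (s ^ 2 + r ^ 2 - 2 * s * r * Real.cos θ) ^ (-(α + 2) / 2) := by
    refine setIntegral_congr_fun measurableSet_Ioo fun θ _ => ?_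
    have hps : Real.sqrt (s^2 + r^2 - 2*s*r*Real.cos θ) ^ (-(α+2))
        = (s^2 + r^2 - 2*s*r*Real.cos θ) ^ (-(α+2)/2) := by
      rw [Real.sqrt_eq_rpow, ← Real.rpow_mul (hxpos θ).le]
      congr 1
      ring
    simp only [hEdef, hps]
  rw [hFeq]
  ring
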